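/- Every k-th order real symmetric tensor A on R^n with n ≥ 1 and k even has at least one Z-eigenpair: there exist λ ∈ R and x ∈ R^n with ‖x‖_2 = 1 and A ×_1 x ×_2 ... ×_{k-1} x = λ x. Moreover, λ can be taken as the maximum of the homogeneous form A x^k = A ×_1 x ... ×_k x over the unit sphere, attained at a maximizer x. -/

import Mathlib

open Finset

/-- For a `(k+1)`-th order cubical tensor `A` on `ℝ^n`, the contraction
`A ×₁ x ×₂ x ⋯ ×ₖ x ∈ ℝ^n` along the first `k` modes. -/
def tvp {n k : ℕ} (A : (Fin (k + 1) → Fin n) → ℝ) (x : Fin n → ℝ) : Fin n → ℝ :=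
  fun i => ∑ j : Fin k → Fin n, A (Fin.snoc j i) * ∏ p, x (j p)

/-- The homogeneous form `A x^{k+1} = A ×₁ x ⋯ ×_{k+1} x`. -/
def tform {n k : ℕ} (A : (Fin (k + 1) → Fin n) → ℝ) (x : Fin n → ℝ) : ℝ :=
  ∑ j : Fin (k + 1) → Fin n, A j * ∏ p, x (j p)

/-- decomposition of `Fin (k+1) → Fin n` as `(Fin k → Fin n) × Fin n` via `snoc`. -/
def snocEquiv (n k : ℕ) : ((Fin k → Fin n) × Fin n) ≃ (Fin (k + 1) → Fin n) where
  toFun p := Fin.snoc p.1 p.2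
  invFun j := (Fin.init j, j (Fin.last k))
  left_inv p := by simp
  right_inv j := by simp [Fin.snoc_init_self]

lemma erase_last_eq (k : ℕ) :
    (univ : Finset (Fin (k + 1))).erase (Fin.last k) = Finset.Iio (Fin.last k) := by
  ext q
  simp [Fin.lt_def, Fin.ext_iff, Fin.last]
  omega

lemma prod_erase_last {k : ℕ} (f : Fin (k + 1) → ℝ) :
    ∏ q ∈ (univ : Finset (Fin (k + 1))).erase (Fin.last k), f q
      = ∏ p : Fin k, f p.castSucc := by
  rw [erase_last_eq, Fin.Iio_last_eq_map, Finset.prod_map]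
  rfl

lemma tform_eq_sum_mul_tvp {n k : ℕ} (A : (Fin (k + 1) → Fin n) → ℝ) (x : Fin n → ℝ) :
    tform A x = ∑ i, x i * tvp A x i := by
  unfold tform tvp
  rw [← Equiv.sum_comp (snocEquiv n k) (fun j => A j * ∏ p, x (j p)), Fintype.sum_prod_type,
    Finset.sum_comm]
  refine Finset.sum_congr rfl fun i _ => ?_
  rw [Finset.mul_sum]
  refine Finset.sum_congr rfl fun j _ => ?_
  simp only [snocEquiv, Equiv.coe_fn_mk, Fin.prod_univ_castSucc, Fin.snoc_castSucc, Fin.snoc_last]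
  ring

lemma sum_last_eq_tvp {n k : ℕ} (A : (Fin (k + 1) → Fin n) → ℝ) (x v : Fin n → ℝ) :
    ∑ j : Fin (k + 1) → Fin n,
        A j * ((∏ q ∈ univ.erase (Fin.last k), x (j q)) * v (j (Fin.last k)))
      = ∑ i, tvp A x i * v i := by
  unfold tvp
  rw [← Equiv.sum_comp (snocEquiv n k)
    (fun j => A j * ((∏ q ∈ univ.erase (Fin.last k), x (j q)) * v (j (Fin.last k)))),
    Fintype.sum_prod_type, Finset.sum_comm]
  refine Finset.sum_congr rfl fun i _ => ?_
  rw [Finset.sum_mul]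
  refine Finset.sum_congr rfl fun j _ => ?_
  simp only [snocEquiv, Equiv.coe_fn_mk, Fin.snoc_last, prod_erase_last, Fin.snoc_castSucc]
  ring

lemma sum_perm_eq_tvp {n k : ℕ} {A : (Fin (k + 1) → Fin n) → ℝ}
    (hsym : ∀ σ : Equiv.Perm (Fin (k + 1)), ∀ j, A (j ∘ σ) = A j)
    (x v : Fin n → ℝ) (p : Fin (k + 1)) :
    ∑ j : Fin (k + 1) → Fin n, A j * ((∏ q ∈ univ.erase p, x (j q)) * v (j p))
      = ∑ i, tvp A x i * v i := by
  rw [← sum_last_eq_tvp A x v]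
  set σ : Equiv.Perm (Fin (k + 1)) := Equiv.swap p (Fin.last k) with hσ
  refine (Fintype.sum_equiv (Equiv.arrowCongr σ (Equiv.refl (Fin n))) _ _ fun j => ?_).symm
  have hE : (Equiv.arrowCongr σ (Equiv.refl (Fin n))) j = j ∘ σ := by
    ext q
    simp [Equiv.arrowCongr, hσ, Equiv.symm_swap]
  rw [hE, hsym σ j]
  have h1 : (j ∘ σ) p = j (Fin.last k) := by simp [hσ]
  have h2 : ∏ q ∈ univ.erase p, x ((j ∘ σ) q) = ∏ q ∈ univ.erase (Fin.last k), x (j q) := by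
    simp only [Function.comp_apply]
    refine Finset.prod_nbij (fun q => σ q) ?_ ?_ ?_ (fun a _ => rfl)
    · intro a ha
      simp only [Finset.mem_erase, Finset.mem_univ, and_true] at ha ⊢
      simpa [hσ] using fun h => ha (σ.injective (by simpa [hσ] using h))
    · exact fun a _ b _ h => σ.injective h
    · intro b hb
      simp only [Finset.coe_erase, Set.mem_image, Set.mem_diff, Set.mem_singleton_iff] at hb ⊢
      refine ⟨σ.symm b, ⟨by simp, fun h => ?_⟩, by simp⟩
      exact hb.2 (by rw [← σ.apply_symm_apply b, h]; simp [hσ])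
  rw [h1, h2]

theorem symmetric_tensor_has_zeigenpair {n k : ℕ} (hn : 1 ≤ n) (hke : Even (k + 1))
    (A : (Fin (k + 1) → Fin n) → ℝ)
    (hsym : ∀ σ : Equiv.Perm (Fin (k + 1)), ∀ j, A (j ∘ σ) = A j) :
    ∃ lam : ℝ, ∃ x : Fin n → ℝ, (∑ i, x i ^ 2 = 1) ∧
      (∀ i, tvp A x i = lam * x i) ∧
      lam = tform A x ∧
      ∀ y : Fin n → ℝ, (∑ i, y i ^ 2 = 1) → tform A y ≤ lam := by
  classical
  set S : Set (Fin n → ℝ) := {y | ∑ i, y i ^ 2 = 1} with hS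
  have hfcont : Continuous fun y : Fin n → ℝ => ∑ i, y i ^ 2 :=
    continuous_finset_sum _ fun i _ => (continuous_apply i).pow 2
  have hScl : IsClosed S := isClosed_eq hfcont continuous_const
  have hSb : Bornology.IsBounded S := by
    rw [Metric.isBounded_iff_subset_closedBall 0]
    refine ⟨1, fun y hy => ?_⟩
    rw [Metric.mem_closedBall, dist_zero_right, pi_norm_le_iff_of_nonneg zero_le_one]
    intro i
    have h1 : y i ^ 2 ≤ 1 := by
      have := Finset.single_le_sum (f := fun i => y i ^ 2) (fun i _ => sq_nonneg _)
        (Finset.mem_univ i)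
      exact le_of_le_of_eq this hy
    rw [Real.norm_eq_abs]
    nlinarith [sq_abs (y i), abs_nonneg (y i)]
  have hScomp : IsCompact S := Metric.isCompact_of_isClosed_isBounded hScl hSb
  have hSne : S.Nonempty := by
    refine ⟨(Pi.single (M := fun _ : Fin n => ℝ) ⟨0, hn⟩ 1 : Fin n → ℝ), ?_⟩
    have hps : ∀ i' : Fin n, (Pi.single (M := fun _ : Fin n => ℝ) ⟨0, hn⟩ 1 i') ^ 2
        = if i' = ⟨0, hn⟩ then 1 else 0 := by
      intro i'; rw [Pi.single_apply]; split <;> norm_num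
    simp only [hS, Set.mem_setOf_eq]
    rw [Finset.sum_congr rfl fun i' _ => hps i', Finset.sum_ite_eq' univ _ _]
    simp
  have hcont : Continuous (tform A) := by
    unfold tform
    exact continuous_finset_sum _ fun j _ =>
      (continuous_const.mul (continuous_finset_prod _ fun p _ => continuous_apply (j p)))
  obtain ⟨x, hxS, hmax⟩ := hScomp.exists_isMaxOn hSne hcont.continuousOn
  have hxu : ∑ i, x i ^ 2 = 1 := hxS
  have hx1 : ∑ i, x i * x i = 1 := by simpa [sq] using hxu
  -- derivatives
  set phi : (Fin n → ℝ) → ℝ := fun y => ∑ i, y i * y i with hphi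
  set P : (Fin n → ℝ) →L[ℝ] ℝ :=
    ∑ i, (x i • ContinuousLinearMap.proj i + x i • ContinuousLinearMap.proj i) with hP
  have hproj : ∀ i : Fin n, HasStrictFDerivAt (fun y : Fin n → ℝ => y i)
      (ContinuousLinearMap.proj i : (Fin n → ℝ) →L[ℝ] ℝ) x := fun i =>
    (ContinuousLinearMap.proj i : (Fin n → ℝ) →L[ℝ] ℝ).hasStrictFDerivAt
  have hPd : HasStrictFDerivAt phi P x :=
    HasStrictFDerivAt.fun_sum fun i _ => (hproj i).mul (hproj i)
  set D : (Fin n → ℝ) →L[ℝ] ℝ :=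
    ∑ j : Fin (k + 1) → Fin n, A j •
      (∑ p, (∏ q ∈ univ.erase p, x (j q)) • (ContinuousLinearMap.proj (j p))) with hD
  have hDd : HasStrictFDerivAt (tform A) D x := by
    unfold tform
    exact HasStrictFDerivAt.fun_sum fun j _ =>
      (HasStrictFDerivAt.finset_prod fun p _ => hproj (j p)).const_mul (A j)
  -- applied formulas
  have hPapp : ∀ v, P v = 2 * ∑ i, x i * v i := by
    intro v
    simp only [hP, ContinuousLinearMap.sum_apply, ContinuousLinearMap.add_apply,
      ContinuousLinearMap.smul_apply, ContinuousLinearMap.proj_apply, smul_eq_mul]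
    rw [Finset.mul_sum]
    exact Finset.sum_congr rfl fun i _ => by ring
  have hDapp : ∀ v, D v = ((k : ℝ) + 1) * ∑ i, tvp A x i * v i := by
    intro v
    simp only [hD, ContinuousLinearMap.sum_apply, ContinuousLinearMap.smul_apply,
      ContinuousLinearMap.proj_apply, smul_eq_mul]
    have : ∀ j : Fin (k + 1) → Fin n,
        A j * ∑ p, (∏ q ∈ univ.erase p, x (j q)) * v (j p)
          = ∑ p, A j * ((∏ q ∈ univ.erase p, x (j q)) * v (j p)) := fun j => by
      rw [Finset.mul_sum]
    rw [Finset.sum_congr rfl fun j _ => this j, Finset.sum_comm]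
    rw [Finset.sum_congr rfl fun p _ => sum_perm_eq_tvp hsym x v p]
    simp [Finset.sum_const, mul_comm]
  -- Lagrange multipliers
  have hextr : IsLocalExtrOn (tform A) {y | phi y = phi x} x := by
    have hset : {y | phi y = phi x} = S := by
      ext y
      simp only [hphi, Set.mem_setOf_eq, hS, hx1]
      constructor
      · intro h; rw [← h]; exact Finset.sum_congr rfl fun i _ => sq (y i)
      · intro h; rw [← h]; exact Finset.sum_congr rfl fun i _ => (sq (y i)).symm
    rw [hset]
    exact IsExtrOn.localize (Or.inr hmax)
  obtain ⟨a, b, hab, hrel⟩ := hextr.exists_multipliers_of_hasStrictFDerivAt_1d hPd hDd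
  have happ : ∀ v : Fin n → ℝ,
      a * (2 * ∑ i, x i * v i) + b * (((k : ℝ) + 1) * ∑ i, tvp A x i * v i) = 0 := by
    intro v
    have h0 := ContinuousLinearMap.ext_iff.mp hrel v
    simpa [ContinuousLinearMap.add_apply, ContinuousLinearMap.smul_apply, smul_eq_mul,
      hPapp v, hDapp v] using h0
  have hb : b ≠ 0 := by
    intro hb0
    have h0 := happ x
    rw [hb0, hx1] at h0
    have ha0 : a = 0 := by linarith
    exact hab (by simp [ha0, hb0, Prod.ext_iff])
  have hk1 : ((k : ℝ) + 1) ≠ 0 := by positivity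
  set c : ℝ := -(2 * a) / (b * ((k : ℝ) + 1)) with hc
  have heig : ∀ i, tvp A x i = c * x i := by
    intro i
    have h0 := happ (Pi.single (M := fun _ : Fin n => ℝ) i 1)
    have hsx : ∑ i', x i' * Pi.single (M := fun _ : Fin n => ℝ) i 1 i' = x i := by
      rw [Finset.sum_congr rfl (fun i' _ => by
        rw [Pi.single_apply, mul_ite, mul_one, mul_zero])]
      simp
    have hst : ∑ i', tvp A x i' * Pi.single (M := fun _ : Fin n => ℝ) i 1 i' = tvp A x i := by
      rw [Finset.sum_congr rfl (fun i' _ => by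
        rw [Pi.single_apply, mul_ite, mul_one, mul_zero])]
      simp
    rw [hsx, hst] at h0
    have hbk : b * ((k : ℝ) + 1) ≠ 0 := mul_ne_zero hb hk1
    rw [hc, div_mul_eq_mul_div, eq_div_iff hbk]
    linear_combination h0
  have hlam : c = tform A x := by
    rw [tform_eq_sum_mul_tvp]
    rw [Finset.sum_congr rfl fun i _ => by rw [heig i]]
    rw [Finset.sum_congr rfl fun i _ => (by ring : x i * (c * x i) = c * (x i * x i)),
      ← Finset.mul_sum, hx1, mul_one]
  refine ⟨c, x, hxu, heig, hlam.trans rfl, fun y hy => ?_⟩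
  rw [hlam]
  exact hmax hy
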